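/- Every Banach space X with the scalar-plus-compact property (every bounded operator on X is of the form λI + K with K compact) satisfies the Uniform Approximation on Large Subspaces property: there exists C > 0 such that for every convex compact W ⊂ 𝓛(X), every A ∈ 𝓛(X) and ε > 0 with the property that for every x in the unit ball of X there is B ∈ W with ‖A(x) − B(x)‖ ≤ ε, there exist a finite-codimensional closed subspace Y of X and B ∈ W with ‖(A − B)|_Y‖ ≤ Cε. -/

import Mathlib

open Metric

section Aux
variable {X : Type*} [NormedAddCommGroup X] [NormedSpace ℝ X]

lemma st16_findimQuotInf {ι : Type*} [Finite ι] (Y : ι → Submodule ℝ X)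
    (h : ∀ i, FiniteDimensional ℝ (X ⧸ Y i)) :
    FiniteDimensional ℝ (X ⧸ ⨅ i, Y i) := by
  cases nonempty_fintype ι
  let f : X →ₗ[ℝ] (∀ i, X ⧸ Y i) := LinearMap.pi fun i => (Y i).mkQ
  have hker : (⨅ i, Y i) = LinearMap.ker f := by
    simp [f, LinearMap.ker_pi, Submodule.ker_mkQ]
  rw [hker]
  exact Module.Finite.equiv f.quotKerEquivRange.symm

lemma st16_findimQuotKer (f : X →L[ℝ] ℝ) : FiniteDimensional ℝ (X ⧸ LinearMap.ker (f : X →ₗ[ℝ] ℝ)) :=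
  Module.Finite.equiv (f : X →ₗ[ℝ] ℝ).quotKerEquivRange.symm
end Aux

section Main
variable {X : Type*} [NormedAddCommGroup X] [NormedSpace ℝ X]

/-- A compact operator has small norm on some closed finite-codimensional subspace. -/
lemma st16_compact_small (K : X →L[ℝ] X) (hK : IsCompactOperator K) {δ : ℝ} (hδ : 0 < δ) :
    ∃ Y : Submodule ℝ X, IsClosed (Y : Set X) ∧ FiniteDimensional ℝ (X ⧸ Y) ∧
      ∀ y ∈ Y, ‖K y‖ ≤ δ * ‖y‖ := by
  by_contra hcon
  push_neg at hcon
  -- for a list of functionals, the intersection of kernels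
  set Yl : List (X →L[ℝ] ℝ) → Submodule ℝ X :=
    fun l => ⨅ i : Fin l.length, LinearMap.ker (l.get i : X →ₗ[ℝ] ℝ) with hYl
  have hclosed : ∀ l, IsClosed ((Yl l : Submodule ℝ X) : Set X) := by
    intro l
    have : ((Yl l : Submodule ℝ X) : Set X) = ⋂ i : Fin l.length, (LinearMap.ker (l.get i : X →ₗ[ℝ] ℝ) : Set X) := by
      simp [hYl, Submodule.coe_iInf]
    rw [this]
    exact isClosed_iInter fun i => ContinuousLinearMap.isClosed_ker _
  have hfd : ∀ l, FiniteDimensional ℝ (X ⧸ Yl l) :=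
    fun l => st16_findimQuotInf _ fun i => st16_findimQuotKer _
  -- pick a bad unit vector in each such subspace
  have hbad : ∀ l, ∃ x : X, x ∈ Yl l ∧ ‖x‖ = 1 ∧ δ < ‖K x‖ := by
    intro l
    obtain ⟨y, hyY, hy⟩ := hcon (Yl l) (hclosed l) (hfd l)
    have hy0 : y ≠ 0 := by
      rintro rfl
      simp at hy
    refine ⟨‖y‖⁻¹ • y, (Yl l).smul_mem _ hyY, ?_, ?_⟩
    · rw [norm_smul, norm_inv, norm_norm, inv_mul_cancel₀ (norm_ne_zero_iff.2 hy0)]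
    · rw [map_smul, norm_smul, norm_inv, norm_norm]
      rw [lt_inv_mul_iff₀ (norm_pos_iff.2 hy0), mul_comm]
      exact hy
  choose xf hxfY hxf1 hxfK using hbad
  -- norming functionals
  have hdual : ∀ l, ∃ g : X →L[ℝ] ℝ, ‖g‖ = 1 ∧ g (K (xf l)) = ‖K (xf l)‖ := by
    intro l
    refine exists_dual_vector ℝ _ ?_
    intro h0
    have := hxfK l
    rw [h0] at this
    exact absurd this hδ.not_gt
  choose gf hgf1 hgf2 using hdual
  -- the recursively defined lists
  let ls : ℕ → List (X →L[ℝ] ℝ) := fun n => Nat.rec [] (fun m l => ((gf l).comp K) :: l) n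
  have hls : ∀ n, ls (n+1) = ((gf (ls n)).comp K) :: ls n := fun n => rfl
  have hmem : ∀ m n, m < n → ((gf (ls m)).comp K) ∈ ls n := by
    intro m n hmn
    induction n with
    | zero => omega
    | succ k ih =>
      rw [hls]
      rcases Nat.lt_succ_iff_lt_or_eq.1 hmn with h | h
      · exact List.mem_cons_of_mem _ (ih h)
      · subst h; exact List.mem_cons_self
  -- membership in the kernel intersection
  have hker : ∀ m n, m < n → (gf (ls m)) (K (xf (ls n))) = 0 := by
    intro m n hmn
    have hx := hxfY (ls n)
    have hm := hmem m n hmn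
    obtain ⟨i, hi⟩ := List.get_of_mem hm
    have := (Submodule.mem_iInf _).1 hx i
    rw [hi] at this
    simpa using this
  -- separation
  have hsep : ∀ m n, m < n → δ < ‖K (xf (ls n)) - K (xf (ls m))‖ := by
    intro m n hmn
    have h1 : (gf (ls m)) (K (xf (ls n)) - K (xf (ls m))) = -‖K (xf (ls m))‖ := by
      rw [map_sub, hker m n hmn, hgf2]; ring
    have h2 : ‖K (xf (ls m))‖ ≤ ‖K (xf (ls n)) - K (xf (ls m))‖ := by
      have := (gf (ls m)).le_opNorm (K (xf (ls n)) - K (xf (ls m)))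
      rw [h1, hgf1, one_mul] at this
      calc ‖K (xf (ls m))‖ = ‖-‖K (xf (ls m))‖‖ := by rw [norm_neg, norm_norm]
        _ ≤ _ := this
    exact lt_of_lt_of_le (hxfK (ls m)) h2
  -- compactness contradiction
  have hScomp : IsCompact (closure (K '' closedBall 0 1)) := by
    have := hK.isCompact_closure_image_closedBall (𝕜₁ := ℝ) (𝕜₂ := ℝ) (f := (K : X →ₗ[ℝ] X)) 1
    simpa using this
  have hmem' : ∀ n, K (xf (ls n)) ∈ closure (K '' closedBall 0 1) := by
    intro n
    exact subset_closure ⟨xf (ls n), by simp [hxf1 (ls n)], rfl⟩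
  obtain ⟨a, _, φ, hφ, hconv⟩ := hScomp.tendsto_subseq hmem'
  rw [Metric.tendsto_atTop] at hconv
  obtain ⟨N, hN⟩ := hconv (δ/2) (by linarith)
  have h1 := hN N le_rfl
  have h2 := hN (N+1) (by omega)
  have hlt : φ N < φ (N+1) := hφ (by omega)
  have hgt := hsep (φ N) (φ (N+1)) hlt
  rw [← dist_eq_norm] at hgt
  have htri : dist (K (xf (ls (φ (N+1))))) (K (xf (ls (φ N)))) ≤
      dist (K (xf (ls (φ (N+1))))) a + dist (K (xf (ls (φ N)))) a := dist_triangle_right _ _ _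
  simp only [Function.comp] at h1 h2
  linarith
end Main

section Main2
variable {X : Type*} [NormedAddCommGroup X] [NormedSpace ℝ X]

lemma st16_nontrivial_fincodim (hinf : ¬ FiniteDimensional ℝ X) (Y : Submodule ℝ X)
    (hfd : FiniteDimensional ℝ (X ⧸ Y)) : ∃ x : X, x ∈ Y ∧ ‖x‖ = 1 := by
  have hYne : Y ≠ ⊥ := by
    rintro rfl
    exact hinf (Module.Finite.equiv (Submodule.quotEquivOfEqBot ⊥ rfl))
  obtain ⟨y, hyY, hy0⟩ := Submodule.exists_mem_ne_zero_of_ne_bot hYne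
  exact ⟨‖y‖⁻¹ • y, Y.smul_mem _ hyY, by
    rw [norm_smul, norm_inv, norm_norm, inv_mul_cancel₀ (norm_ne_zero_iff.2 hy0)]⟩

lemma st16_exists_unit_small (hinf : ¬ FiniteDimensional ℝ X)
    (K : X →L[ℝ] X) (hK : IsCompactOperator K) {δ : ℝ} (hδ : 0 < δ) :
    ∃ x : X, ‖x‖ = 1 ∧ ‖K x‖ ≤ δ := by
  obtain ⟨Y, _, hfd, hb⟩ := st16_compact_small K hK hδ
  obtain ⟨x, hxY, hx1⟩ := st16_nontrivial_fincodim hinf Y hfd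
  exact ⟨x, hx1, by simpa [hx1] using hb x hxY⟩
end Main2

/-- Every Banach space with the scalar-plus-compact property satisfies the
Uniform Approximation on Large Subspaces (UALS) property: there is `C > 0` such that
whenever a convex, (operator-norm) compact set `W ⊆ 𝓛(X)` `ε`-pointwise approximates an
operator `A` on the unit ball, there are a closed finite-codimensional subspace `Y` and
`B ∈ W` with `‖(A - B)|_Y‖ ≤ C ε`. -/
theorem statement16 {X : Type*} [NormedAddCommGroup X] [NormedSpace ℝ X] [CompleteSpace X]
    (hspc : ∀ A : X →L[ℝ] X, ∃ (c : ℝ) (K : X →L[ℝ] X),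
      IsCompactOperator K ∧ A = c • ContinuousLinearMap.id ℝ X + K) :
    ∃ C > (0:ℝ), ∀ (W : Set (X →L[ℝ] X)), Convex ℝ W → IsCompact W →
      ∀ (A : X →L[ℝ] X), ∀ ε > (0:ℝ),
        (∀ x : X, ‖x‖ ≤ 1 → ∃ B ∈ W, ‖A x - B x‖ ≤ ε) →
        ∃ (Y : Submodule ℝ X), IsClosed (Y : Set X) ∧ FiniteDimensional ℝ (X ⧸ Y) ∧
          ∃ B ∈ W, ∀ y ∈ Y, ‖A y - B y‖ ≤ C * ε * ‖y‖ := by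
  classical
  choose lam Kp hKp hdec using hspc
  have hpt : ∀ (T : X →L[ℝ] X) (x : X), Kp T x = T x - lam T • x := by
    intro T x
    have h : T x = lam T • x + Kp T x := by
      nth_rewrite 1 [hdec T]
      simp
    rw [h]
    abel
  refine ⟨3, by norm_num, ?_⟩
  intro W _hconv hWcomp A ε hε happ
  by_cases hfin : FiniteDimensional ℝ X
  · obtain ⟨B, hBW, -⟩ := happ 0 (by simp)
    refine ⟨⊥, by simpa using isClosed_singleton, inferInstance, B, hBW, ?_⟩
    intro y hy
    rw [Submodule.mem_bot] at hy
    subst hy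
    simp
  · -- 1-Lipschitz-type estimate for `lam`
    have hlip : ∀ S T : X →L[ℝ] X, |lam S - lam T| ≤ ‖S - T‖ := by
      intro S T
      refine le_of_forall_pos_le_add fun δ' hδ' => ?_
      obtain ⟨x, hx1, hxs⟩ := st16_exists_unit_small hfin (Kp S - Kp T)
        ((hKp S).sub (hKp T)) hδ'
      have hxe : (S - T) x = (lam S - lam T) • x + (Kp S x - Kp T x) := by
        have h1 := hpt S x; have h2 := hpt T x
        simp only [ContinuousLinearMap.sub_apply, sub_smul]
        rw [eq_sub_iff_add_eq] at h1 h2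
        rw [← h1, ← h2]
        abel
      have : |lam S - lam T| = ‖(lam S - lam T) • x‖ := by
        rw [norm_smul, hx1, mul_one, Real.norm_eq_abs]
      rw [this]
      have : (lam S - lam T) • x = (S - T) x - (Kp S x - Kp T x) := by
        rw [hxe]; abel
      rw [this]
      calc ‖(S - T) x - (Kp S x - Kp T x)‖ ≤ ‖(S - T) x‖ + ‖Kp S x - Kp T x‖ :=
            norm_sub_le _ _
        _ ≤ ‖S - T‖ * ‖x‖ + ‖(Kp S - Kp T) x‖ :=
            add_le_add ((S - T).le_opNorm x) (by simp)
        _ ≤ ‖S - T‖ + δ' := by rw [hx1, mul_one]; gcongr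
    -- find B ∈ W with small scalar part
    have key : ∃ B ∈ W, |lam (A - B)| ≤ 2 * ε := by
      by_contra hno
      push_neg at hno
      obtain ⟨t, htfin, htcov⟩ :=
        Metric.totallyBounded_iff.1 hWcomp.totallyBounded (ε/4) (by linarith)
      haveI := htfin.fintype
      choose Yc hYccl hYcfd hYcb using
        fun c : t => st16_compact_small (Kp (A - (c : X →L[ℝ] X))) (hKp _) (half_pos hε)
      have hquot : FiniteDimensional ℝ (X ⧸ ⨅ c : t, Yc c) := st16_findimQuotInf Yc hYcfd
      obtain ⟨x, hxY, hx1⟩ := st16_nontrivial_fincodim hfin _ hquot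
      obtain ⟨B, hBW, hABx⟩ := happ x hx1.le
      obtain ⟨c, hct, hBc⟩ : ∃ c ∈ t, B ∈ Metric.ball c (ε/4) := by
        simpa using htcov hBW
      rw [Metric.mem_ball, dist_eq_norm] at hBc
      have hxYc : x ∈ Yc ⟨c, hct⟩ := (Submodule.mem_iInf _).1 hxY ⟨c, hct⟩
      have hKc : ‖Kp (A - c) x‖ ≤ ε/2 := by
        have := hYcb ⟨c, hct⟩ x hxYc
        simpa [hx1] using this
      have hd : ‖Kp (A - B) x - Kp (A - c) x‖ ≤ ε/2 := by
        have he : Kp (A - B) x - Kp (A - c) x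
            = (c x - B x) + (lam (A - c) - lam (A - B)) • x := by
          rw [hpt, hpt]
          simp only [ContinuousLinearMap.sub_apply, sub_smul]
          abel
        have h1 : ‖(c : X →L[ℝ] X) x - B x‖ ≤ ε/4 := by
          have : ‖(c - B : X →L[ℝ] X) x‖ ≤ ‖(c - B : X →L[ℝ] X)‖ * ‖x‖ :=
            (c - B : X →L[ℝ] X).le_opNorm x
          rw [hx1, mul_one] at this
          simp only [ContinuousLinearMap.sub_apply] at this
          calc ‖(c : X →L[ℝ] X) x - B x‖ ≤ ‖(c - B : X →L[ℝ] X)‖ := this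
            _ = ‖B - c‖ := by rw [norm_sub_rev]
            _ ≤ ε/4 := hBc.le
        have h2 : ‖(lam (A - c) - lam (A - B)) • x‖ ≤ ε/4 := by
          rw [norm_smul, hx1, mul_one, Real.norm_eq_abs]
          have := hlip (A - c) (A - B)
          have heq : (A - c) - (A - B) = B - c := by abel
          rw [heq] at this
          exact this.trans hBc.le
        calc ‖Kp (A - B) x - Kp (A - c) x‖
            ≤ ‖(c : X →L[ℝ] X) x - B x‖ + ‖(lam (A - c) - lam (A - B)) • x‖ := by
              rw [he]; exact norm_add_le _ _
          _ ≤ ε/4 + ε/4 := add_le_add h1 h2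
          _ = ε/2 := by ring
      have hKB : ‖Kp (A - B) x‖ ≤ ε := by
        calc ‖Kp (A - B) x‖ ≤ ‖Kp (A - B) x - Kp (A - c) x‖ + ‖Kp (A - c) x‖ := by
              simpa using norm_add_le (Kp (A - B) x - Kp (A - c) x) (Kp (A - c) x)
          _ ≤ ε/2 + ε/2 := add_le_add hd hKc
          _ = ε := by ring
      have hlow : ‖A x - B x‖ > ε := by
        have he : A x - B x = lam (A - B) • x + Kp (A - B) x := by
          rw [hpt]
          simp only [ContinuousLinearMap.sub_apply]
          abel
        have h3 : |lam (A - B)| ≤ ‖A x - B x‖ + ‖Kp (A - B) x‖ := by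
          have hsm : lam (A - B) • x = (A x - B x) - Kp (A - B) x := by rw [he]; abel
          calc |lam (A - B)| = ‖lam (A - B) • x‖ := by
                rw [norm_smul, hx1, mul_one, Real.norm_eq_abs]
            _ = ‖(A x - B x) - Kp (A - B) x‖ := by rw [hsm]
            _ ≤ ‖A x - B x‖ + ‖Kp (A - B) x‖ := norm_sub_le _ _
        have h2ε := hno B hBW
        linarith
      exact absurd hABx (not_le.2 hlow)
    obtain ⟨B, hBW, hlam⟩ := key
    obtain ⟨Y, hYcl, hYfd, hYb⟩ := st16_compact_small (Kp (A - B)) (hKp _) hε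
    refine ⟨Y, hYcl, hYfd, B, hBW, fun y hy => ?_⟩
    have he : A y - B y = lam (A - B) • y + Kp (A - B) y := by
      rw [hpt]
      simp only [ContinuousLinearMap.sub_apply]
      abel
    calc ‖A y - B y‖ ≤ ‖lam (A - B) • y‖ + ‖Kp (A - B) y‖ := by
          rw [he]; exact norm_add_le _ _
      _ ≤ 2 * ε * ‖y‖ + ε * ‖y‖ := by
          refine add_le_add ?_ (hYb y hy)
          rw [norm_smul, Real.norm_eq_abs]
          exact mul_le_mul_of_nonneg_right hlam (norm_nonneg y)
      _ = 3 * ε * ‖y‖ := by ring
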